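/- Wendel's inequality: for all real x > 0 and y ∈ [0,1], Γ(x+y)/Γ(x) ≤ x^y. -/
import Mathlib

/-- Wendel's inequality: for `x > 0` and `y ∈ [0,1]`, `Γ(x+y)/Γ(x) ≤ x^y`. -/
theorem wendel_inequality
    (x y : ℝ) (hx : 0 < x) (hy : y ∈ Set.Icc (0:ℝ) 1) :
    Real.Gamma (x + y) / Real.Gamma x ≤ x ^ y := by
  obtain ⟨hy0, hy1⟩ := hy
  have hΓx : 0 < Real.Gamma x := Real.Gamma_pos_of_pos hx
  have hΓxy : 0 < Real.Gamma (x + y) := Real.Gamma_pos_of_pos (by linarith)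
  have hconv := Real.convexOn_log_Gamma
  have h := hconv.2 (Set.mem_Ioi.mpr hx) (Set.mem_Ioi.mpr (by linarith : (0:ℝ) < x + 1))
    (by linarith : (0:ℝ) ≤ 1 - y) hy0 (by ring)
  have hpt : (1 - y) • x + y • (x + 1) = x + y := by simp [smul_eq_mul]; ring
  rw [hpt] at h
  simp only [Function.comp_apply] at h
  rw [Real.Gamma_add_one (ne_of_gt hx), Real.log_mul (ne_of_gt hx) (ne_of_gt hΓx)] at h
  have h2 : Real.log (Real.Gamma (x + y)) ≤ Real.log (Real.Gamma x) + y * Real.log x := by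
    simp only [smul_eq_mul] at h; nlinarith
  rw [div_le_iff₀ hΓx, Real.rpow_def_of_pos hx, mul_comm]
  calc Real.Gamma (x + y) = Real.exp (Real.log (Real.Gamma (x + y))) :=
        (Real.exp_log hΓxy).symm
    _ ≤ Real.exp (Real.log (Real.Gamma x) + y * Real.log x) := Real.exp_le_exp.mpr h2
    _ = Real.Gamma x * Real.exp (Real.log x * y) := by
        rw [Real.exp_add, Real.exp_log hΓx, mul_comm y]
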